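/- Let X be a uniformly convex Banach space, Ω, Δ nonempty, closed and convex subsets of X, and Ξ : X → X a cyclic orbital contraction on Ω ∪ Δ with constant η ∈ (0,1). Then Ξ has a best proximity point ς* ∈ Ω, i.e., there exists ς* ∈ Ω with ‖ς* − Ξς*‖ = dist(Ω,Δ). -/

import Mathlib

open Filter Metric

namespace Stmt4Aux

/-- Joint set of odd-gap orbit distances for two starting points `u, v`, with index
lower bounds `A` (for indices of the `u`-orbit) and `B` (for indices of the `v`-orbit). -/
def J {X : Type*} [NormedAddCommGroup X] (Ξ : X → X) (u v : X) (A B : ℕ) : Set ℝ :=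
  { r : ℝ |
    (∃ i j : ℕ, Odd ((i : ℤ) - j) ∧ A ≤ i ∧ A ≤ j ∧ r = ‖Ξ^[i] u - Ξ^[j] u‖) ∨
    (∃ k l : ℕ, Odd ((k : ℤ) - l) ∧ B ≤ k ∧ B ≤ l ∧ r = ‖Ξ^[k] v - Ξ^[l] v‖) ∨
    (∃ p q : ℕ, Odd ((p : ℤ) - q) ∧ A ≤ p ∧ B ≤ q ∧ r = ‖Ξ^[p] u - Ξ^[q] v‖) }

variable {X : Type*} [NormedAddCommGroup X] [NormedSpace ℝ X]

theorem J_nonempty (Ξ : X → X) (u v : X) (A B : ℕ) : (J Ξ u v A B).Nonempty := by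
  refine ⟨‖Ξ^[2*A+2*B+1] u - Ξ^[2*B] v‖,
    Or.inr (Or.inr ⟨2*A+2*B+1, 2*B, ?_, by omega, by omega, rfl⟩)⟩
  rw [Int.odd_iff]; push_cast; omega

theorem J_mono (Ξ : X → X) (u v : X) {A B A' B' : ℕ} (hA : A' ≤ A) (hB : B' ≤ B) :
    J Ξ u v A B ⊆ J Ξ u v A' B' := by
  rintro r (⟨i, j, h1, h2, h3, rfl⟩ | ⟨k, l, h1, h2, h3, rfl⟩ | ⟨p, q, h1, h2, h3, rfl⟩)
  · exact Or.inl ⟨i, j, h1, le_trans hA h2, le_trans hA h3, rfl⟩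
  · exact Or.inr (Or.inl ⟨k, l, h1, le_trans hB h2, le_trans hB h3, rfl⟩)
  · exact Or.inr (Or.inr ⟨p, q, h1, le_trans hA h2, le_trans hB h3, rfl⟩)

theorem J_diag_subset (Ξ : X → X) (u v : X) (A B N : ℕ) : J Ξ u u A B ⊆ J Ξ u v 0 N := by
  rintro r (⟨i, j, h1, h2, h3, rfl⟩ | ⟨k, l, h1, h2, h3, rfl⟩ | ⟨p, q, h1, h2, h3, rfl⟩)
  · exact Or.inl ⟨i, j, h1, Nat.zero_le _, Nat.zero_le _, rfl⟩
  · exact Or.inl ⟨k, l, h1, Nat.zero_le _, Nat.zero_le _, rfl⟩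
  · exact Or.inl ⟨p, q, h1, Nat.zero_le _, Nat.zero_le _, rfl⟩

theorem J_diag_elem (Ξ : X → X) (w : X) (A B : ℕ) : ∀ r ∈ J Ξ w w A B, ∃ i j : ℕ,
    Odd ((i : ℤ) - j) ∧ min A B ≤ i ∧ min A B ≤ j ∧ r = ‖Ξ^[i] w - Ξ^[j] w‖ := by
  rintro r (⟨i, j, h1, h2, h3, rfl⟩ | ⟨k, l, h1, h2, h3, rfl⟩ | ⟨p, q, h1, h2, h3, rfl⟩)
  · exact ⟨i, j, h1, le_trans (min_le_left _ _) h2, le_trans (min_le_left _ _) h3, rfl⟩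
  · exact ⟨k, l, h1, le_trans (min_le_right _ _) h2, le_trans (min_le_right _ _) h3, rfl⟩
  · exact ⟨p, q, h1, le_trans (min_le_left _ _) h2, le_trans (min_le_right _ _) h3, rfl⟩

theorem J_bddAbove {Ξ : X → X}
    (hbdd : ∀ x : X, Bornology.IsBounded (Set.range fun n => Ξ^[n] x)) (u v : X) (A B : ℕ) :
    BddAbove (J Ξ u v A B) := by
  have key : ∀ w w' : X, ∃ C : ℝ, ∀ p q : ℕ, ‖Ξ^[p] w - Ξ^[q] w'‖ ≤ C := by
    intro w w'
    obtain ⟨C, hC⟩ := Metric.isBounded_iff.mp ((hbdd w).union (hbdd w'))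
    exact ⟨C, fun p q => by
      rw [← dist_eq_norm]
      exact hC (Or.inl ⟨p, rfl⟩) (Or.inr ⟨q, rfl⟩)⟩
  obtain ⟨C1, h1⟩ := key u u
  obtain ⟨C2, h2⟩ := key v v
  obtain ⟨C3, h3⟩ := key u v
  refine ⟨max C1 (max C2 C3), ?_⟩
  rintro r (⟨i, j, _, _, _, rfl⟩ | ⟨k, l, _, _, _, rfl⟩ | ⟨p, q, _, _, _, rfl⟩)
  · exact le_trans (h1 i j) (le_max_left _ _)
  · exact le_trans (h2 k l) (le_trans (le_max_left _ _) (le_max_right _ _))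
  · exact le_trans (h3 p q) (le_trans (le_max_right _ _) (le_max_right _ _))

/-- The key "peeling" estimate coming from the cyclic orbital contraction property. -/
theorem peel {Ω Δ : Set X} {Ξ : X → X} {η d : ℝ} (hη : η ∈ Set.Ioo (0:ℝ) 1)
    (hcontr : ∀ ς ∈ Ω, ∀ ϑ ∈ Δ,
      ‖Ξ ς - Ξ ϑ‖ ≤ η * sSup { r : ℝ |
      (∃ i j : ℕ, Odd ((i : ℤ) - j) ∧ r = ‖Ξ^[i] ς - Ξ^[j] ς‖) ∨
      (∃ k l : ℕ, Odd ((k : ℤ) - l) ∧ r = ‖Ξ^[k] ϑ - Ξ^[l] ϑ‖) ∨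
      (∃ p q : ℕ, Even ((p : ℤ) - q) ∧ r = ‖Ξ^[p] ς - Ξ^[q] ϑ‖) }
        + (1 - η) * d)
    (hmemΩ : ∀ u ∈ Ω, ∀ n : ℕ, Even n → Ξ^[n] u ∈ Ω)
    (hmemΔ : ∀ u ∈ Ω, ∀ n : ℕ, Odd n → Ξ^[n] u ∈ Δ)
    (hJbdd : ∀ u v : X, ∀ A B : ℕ, BddAbove (J Ξ u v A B))
    {u : X} (hu : u ∈ Ω) {v : X} (hv : v ∈ Ω) (a b : ℕ) (hab : Odd ((a:ℤ) - b)) :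
    ‖Ξ^[a+1] u - Ξ^[b+1] v‖ ≤ η * sSup (J Ξ u v a b) + (1 - η) * d := by
  rcases Nat.even_or_odd a with ha | ha
  · have hb : Odd b := by
      rw [Int.odd_iff] at hab; rw [Nat.even_iff] at ha; rw [Nat.odd_iff]; omega
    have H := hcontr _ (hmemΩ u hu a ha) _ (hmemΔ v hv b hb)
    rw [Function.iterate_succ_apply' Ξ a u, Function.iterate_succ_apply' Ξ b v]
    refine le_trans H (add_le_add (mul_le_mul_of_nonneg_left ?_ hη.1.le) le_rfl)
    refine csSup_le_csSup (hJbdd u v a b) ⟨_, Or.inl ⟨1, 0, by decide, rfl⟩⟩ ?_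
    rintro r (⟨i, j, h1, rfl⟩ | ⟨k, l, h1, rfl⟩ | ⟨p, q, h1, rfl⟩)
    · refine Or.inl ⟨i + a, j + a, ?_, by omega, by omega, ?_⟩
      · rw [Int.odd_iff] at h1 ⊢; push_cast; omega
      · rw [Function.iterate_add_apply, Function.iterate_add_apply]
    · refine Or.inr (Or.inl ⟨k + b, l + b, ?_, by omega, by omega, ?_⟩)
      · rw [Int.odd_iff] at h1 ⊢; push_cast; omega
      · rw [Function.iterate_add_apply, Function.iterate_add_apply]
    · refine Or.inr (Or.inr ⟨p + a, q + b, ?_, by omega, by omega, ?_⟩)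
      · rw [Int.even_iff] at h1; rw [Int.odd_iff] at hab ⊢; push_cast; omega
      · rw [Function.iterate_add_apply, Function.iterate_add_apply]
  · have hb : Even b := by
      rw [Int.odd_iff] at hab; rw [Nat.odd_iff] at ha; rw [Nat.even_iff]; omega
    have H := hcontr _ (hmemΩ v hv b hb) _ (hmemΔ u hu a ha)
    rw [Function.iterate_succ_apply' Ξ a u, Function.iterate_succ_apply' Ξ b v,
      norm_sub_rev]
    refine le_trans H (add_le_add (mul_le_mul_of_nonneg_left ?_ hη.1.le) le_rfl)
    refine csSup_le_csSup (hJbdd u v a b) ⟨_, Or.inl ⟨1, 0, by decide, rfl⟩⟩ ?_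
    rintro r (⟨i, j, h1, rfl⟩ | ⟨k, l, h1, rfl⟩ | ⟨p, q, h1, rfl⟩)
    · refine Or.inr (Or.inl ⟨i + b, j + b, ?_, by omega, by omega, ?_⟩)
      · rw [Int.odd_iff] at h1 ⊢; push_cast; omega
      · rw [Function.iterate_add_apply, Function.iterate_add_apply]
    · refine Or.inl ⟨k + a, l + a, ?_, by omega, by omega, ?_⟩
      · rw [Int.odd_iff] at h1 ⊢; push_cast; omega
      · rw [Function.iterate_add_apply, Function.iterate_add_apply]
    · refine Or.inr (Or.inr ⟨q + a, p + b, ?_, by omega, by omega, ?_⟩)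
      · rw [Int.even_iff] at h1; rw [Int.odd_iff] at hab ⊢; push_cast; omega
      · rw [Function.iterate_add_apply, Function.iterate_add_apply, norm_sub_rev]

/-- A sequence in a convex set `Ω`, asymptotically realizing the distance to `Δ`
via auxiliary points of `Δ`, is Cauchy (uniform convexity). -/
theorem cauchy_aux [UniformConvexSpace X] (Ω Δ : Set X) (hΩconv : Convex ℝ Ω)
    (d : ℝ) (hd : 0 ≤ d)
    (hdle : ∀ a ∈ Ω, ∀ b ∈ Δ, d ≤ ‖a - b‖)
    (x : ℕ → X) (hx : ∀ n, x n ∈ Ω)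
    (y : ℕ → ℕ → X) (hy : ∀ m n, y m n ∈ Δ)
    (P : ℕ → ℝ)
    (hPb : ∀ N m n, N ≤ m → N ≤ n → ‖x m - y m n‖ ≤ P N ∧ ‖x n - y m n‖ ≤ P N)
    (hPtail : ∀ ε > 0, ∃ N, P N ≤ d + ε) :
    CauchySeq x := by
  rw [Metric.cauchySeq_iff]
  intro ε hε
  rcases eq_or_lt_of_le hd with hd0 | hd0
  · obtain ⟨N, hN⟩ := hPtail (ε/3) (by positivity)
    refine ⟨N, fun m hm n hn => ?_⟩
    rw [dist_eq_norm]
    obtain ⟨h1, h2⟩ := hPb N m n hm hn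
    have e : x m - x n = (x m - y m n) - (x n - y m n) := by abel
    calc ‖x m - x n‖ ≤ ‖x m - y m n‖ + ‖x n - y m n‖ := by rw [e]; exact norm_sub_le _ _
      _ ≤ (d + ε/3) + (d + ε/3) := add_le_add (h1.trans hN) (h2.trans hN)
      _ < ε := by rw [← hd0]; linarith
  · obtain ⟨δ0, hδ0, hUC⟩ := exists_forall_closed_ball_dist_add_le_two_sub X
      (show (0:ℝ) < ε/(d+1) by positivity)
    set δ := min δ0 1 with hδdef
    have hδpos : 0 < δ := lt_min hδ0 one_pos
    have hδ1 : δ ≤ 1 := min_le_right _ _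
    have hUC' : ∀ z w : X, ‖z‖ ≤ 1 → ‖w‖ ≤ 1 → ε/(d+1) ≤ ‖z - w‖ → ‖z + w‖ ≤ 2 - δ := by
      intro z w h1 h2 h3
      refine le_trans (hUC h1 h2 h3) ?_
      have : δ ≤ δ0 := min_le_left _ _
      linarith
    have hγpos : 0 < min 1 (δ*d/4) := lt_min one_pos (by positivity)
    obtain ⟨N, hN⟩ := hPtail _ hγpos
    refine ⟨N, fun m hm n hn => ?_⟩
    rw [dist_eq_norm]
    by_contra hcon
    push_neg at hcon
    obtain ⟨hb1, hb2⟩ := hPb N m n hm hn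
    have hrd : d ≤ P N := le_trans (hdle (x m) (hx m) (y m n) (hy m n)) hb1
    have hrpos : 0 < P N := lt_of_lt_of_le hd0 hrd
    have hr1 : P N ≤ d + 1 := hN.trans (by
      have : min 1 (δ*d/4) ≤ 1 := min_le_left _ _
      linarith)
    have hrγ : P N ≤ d + δ*d/4 := hN.trans (by
      have : min 1 (δ*d/4) ≤ δ*d/4 := min_le_right _ _
      linarith)
    set zu := (P N)⁻¹ • (x m - y m n) with hzu_def
    set zv := (P N)⁻¹ • (x n - y m n) with hzv_def
    have hzu : ‖zu‖ ≤ 1 := by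
      rw [hzu_def, norm_smul, Real.norm_eq_abs, abs_inv, abs_of_pos hrpos, ← div_eq_inv_mul]
      exact div_le_one_of_le₀ hb1 hrpos.le
    have hzv : ‖zv‖ ≤ 1 := by
      rw [hzv_def, norm_smul, Real.norm_eq_abs, abs_inv, abs_of_pos hrpos, ← div_eq_inv_mul]
      exact div_le_one_of_le₀ hb2 hrpos.le
    have hzd : ε/(d+1) ≤ ‖zu - zv‖ := by
      have e : zu - zv = (P N)⁻¹ • (x m - x n) := by
        rw [hzu_def, hzv_def, ← smul_sub]; congr 1; abel
      rw [e, norm_smul, Real.norm_eq_abs, abs_inv, abs_of_pos hrpos, ← div_eq_inv_mul]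
      gcongr <;> linarith
    have h2δ := hUC' zu zv hzu hzv hzd
    have hmid : (1/2 : ℝ) • (x m) + (1/2 : ℝ) • (x n) ∈ Ω :=
      hΩconv (hx m) (hx n) (by norm_num) (by norm_num) (by norm_num)
    have hlow : d ≤ ‖((1/2 : ℝ) • (x m) + (1/2 : ℝ) • (x n)) - y m n‖ :=
      hdle _ hmid _ (hy m n)
    have hsum : 2 * d ≤ ‖(x m - y m n) + (x n - y m n)‖ := by
      have e1 : (1/2 : ℝ) • ((x m - y m n) + (x n - y m n))
          = ((1/2 : ℝ) • x m + (1/2 : ℝ) • x n) - y m n := by module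
      have e2 : ‖(1/2 : ℝ) • ((x m - y m n) + (x n - y m n))‖
          = (1/2) * ‖(x m - y m n) + (x n - y m n)‖ := by
        rw [norm_smul]; norm_num
      rw [e1] at e2
      linarith [hlow.trans_eq e2]
    have hzsum : ‖zu + zv‖ = (P N)⁻¹ * ‖(x m - y m n) + (x n - y m n)‖ := by
      rw [hzu_def, hzv_def, ← smul_add, norm_smul, Real.norm_eq_abs, abs_inv, abs_of_pos hrpos]
    have hfin : 2 * d ≤ (P N) * (2 - δ) := by
      have e : ‖(x m - y m n) + (x n - y m n)‖ = (P N) * ‖zu + zv‖ := by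
        rw [hzsum]; field_simp
      rw [e] at hsum
      calc 2*d ≤ (P N) * ‖zu + zv‖ := hsum
        _ ≤ (P N) * (2 - δ) := by gcongr
    nlinarith [mul_pos hδpos hd0]

end Stmt4Aux

open Stmt4Aux

theorem stmt4 {X : Type*} [NormedAddCommGroup X] [NormedSpace ℝ X] [UniformConvexSpace X]
    [CompleteSpace X] (Ω Δ : Set X) (hΩ : Ω.Nonempty) (hΔ : Δ.Nonempty)
    (hΩc : IsClosed Ω) (hΔc : IsClosed Δ) (hΩconv : Convex ℝ Ω) (hΔconv : Convex ℝ Δ)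
    (Ξ : X → X) (η : ℝ) (hη : η ∈ Set.Ioo (0 : ℝ) 1)
    (hcycΩ : Set.MapsTo Ξ Ω Δ) (hcycΔ : Set.MapsTo Ξ Δ Ω)
    (hbdd : ∀ x : X, Bornology.IsBounded (Set.range fun n => Ξ^[n] x))
    (hcontr : ∀ ς ∈ Ω, ∀ ϑ ∈ Δ,
      ‖Ξ ς - Ξ ϑ‖ ≤ η * sSup { r : ℝ |
      (∃ i j : ℕ, Odd ((i : ℤ) - j) ∧ r = ‖Ξ^[i] ς - Ξ^[j] ς‖) ∨
      (∃ k l : ℕ, Odd ((k : ℤ) - l) ∧ r = ‖Ξ^[k] ϑ - Ξ^[l] ϑ‖) ∨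
      (∃ p q : ℕ, Even ((p : ℤ) - q) ∧ r = ‖Ξ^[p] ς - Ξ^[q] ϑ‖) }
        + (1 - η) * sInf (Set.image2 (fun x y => ‖x - y‖) Ω Δ)) :
    ∃ ςs ∈ Ω, ‖ςs - Ξ ςs‖ = sInf (Set.image2 (fun x y => ‖x - y‖) Ω Δ) := by
  obtain ⟨hη0, hη1⟩ := hη
  set d := sInf (Set.image2 (fun x y => ‖x - y‖) Ω Δ) with hd_def
  obtain ⟨ς0, hς0⟩ := hΩ
  -- basic facts about d
  have hdnn : 0 ≤ d := Real.sInf_nonneg (by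
    rintro r ⟨a, ha, b, hb, rfl⟩
    exact norm_nonneg _)
  have hdle : ∀ a ∈ Ω, ∀ b ∈ Δ, d ≤ ‖a - b‖ := by
    intro a ha b hb
    exact csInf_le ⟨0, by rintro r ⟨a', _, b', _, rfl⟩; exact norm_nonneg _⟩
      (Set.mem_image2_of_mem ha hb)
  -- parity membership of orbits
  have hmem : ∀ u ∈ Ω, ∀ n : ℕ, (Even n → Ξ^[n] u ∈ Ω) ∧ (Odd n → Ξ^[n] u ∈ Δ) := by
    intro u hu n
    induction n with
    | zero => exact ⟨fun _ => hu, fun h => absurd h (by simp)⟩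
    | succ n ih =>
      rw [Function.iterate_succ_apply']
      constructor
      · intro h
        exact hcycΔ (ih.2 (Nat.Even.sub_odd (by omega) h odd_one))
      · intro h
        have hn : Even n := by
          rw [Nat.odd_iff] at h; rw [Nat.even_iff]; omega
        exact hcycΩ (ih.1 hn)
  have hmemΩ : ∀ u ∈ Ω, ∀ n : ℕ, Even n → Ξ^[n] u ∈ Ω := fun u hu n hn => (hmem u hu n).1 hn
  have hmemΔ : ∀ u ∈ Ω, ∀ n : ℕ, Odd n → Ξ^[n] u ∈ Δ := fun u hu n hn => (hmem u hu n).2 hn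
  have hJbdd : ∀ u v : X, ∀ A B : ℕ, BddAbove (J Ξ u v A B) := fun u v A B =>
    J_bddAbove hbdd u v A B
  -- every element of a J-set is the distance from a point of Ω to a point of Δ
  have hJlb : ∀ u ∈ Ω, ∀ v ∈ Ω, ∀ A B : ℕ, ∀ r ∈ J Ξ u v A B, d ≤ r := by
    have key : ∀ u ∈ Ω, ∀ v ∈ Ω, ∀ i j : ℕ, Odd ((i:ℤ) - j) → d ≤ ‖Ξ^[i] u - Ξ^[j] v‖ := by
      intro u hu v hv i j hij
      rcases Nat.even_or_odd i with hi | hi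
      · have hj : Odd j := by
          rw [Int.odd_iff] at hij; rw [Nat.even_iff] at hi; rw [Nat.odd_iff]; omega
        exact hdle _ (hmemΩ u hu i hi) _ (hmemΔ v hv j hj)
      · have hj : Even j := by
          rw [Int.odd_iff] at hij; rw [Nat.odd_iff] at hi; rw [Nat.even_iff]; omega
        rw [norm_sub_rev]
        exact hdle _ (hmemΩ v hv j hj) _ (hmemΔ u hu i hi)
    intro u hu v hv A B r hr
    rcases hr with ⟨i, j, h1, _, _, rfl⟩ | ⟨k, l, h1, _, _, rfl⟩ | ⟨p, q, h1, _, _, rfl⟩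
    · exact key u hu u hu i j h1
    · exact key v hv v hv k l h1
    · exact key u hu v hv p q h1
  have hJd : ∀ u ∈ Ω, ∀ v ∈ Ω, ∀ A B : ℕ, d ≤ sSup (J Ξ u v A B) := by
    intro u hu v hv A B
    obtain ⟨r, hr⟩ := J_nonempty Ξ u v A B
    exact le_trans (hJlb u hu v hv A B r hr) (le_csSup (hJbdd u v A B) hr)
  have hJsupmono : ∀ u v : X, ∀ {A B A' B' : ℕ}, A' ≤ A → B' ≤ B →
      sSup (J Ξ u v A B) ≤ sSup (J Ξ u v A' B') := by
    intro u v A B A' B' hA hB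
    exact csSup_le_csSup (hJbdd u v _ _) (J_nonempty Ξ u v _ _) (J_mono Ξ u v hA hB)
  have hpeel : ∀ {u : X}, u ∈ Ω → ∀ {v : X}, v ∈ Ω → ∀ a b : ℕ, Odd ((a:ℤ) - b) →
      ‖Ξ^[a+1] u - Ξ^[b+1] v‖ ≤ η * sSup (J Ξ u v a b) + (1 - η) * d := by
    intro u hu v hv a b hab
    exact peel ⟨hη0, hη1⟩ hcontr hmemΩ hmemΔ hJbdd hu hv a b hab
  -- the single-orbit contraction recursion and geometric decay
  have hPrec : ∀ N : ℕ, sSup (J Ξ ς0 ς0 (N+1) (N+1)) ≤ η * sSup (J Ξ ς0 ς0 N N) + (1-η) * d := by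
    intro N
    have h0 : 0 ≤ η * sSup (J Ξ ς0 ς0 N N) + (1-η) * d := by
      have := hJd ς0 hς0 ς0 hς0 N N
      nlinarith
    refine Real.sSup_le ?_ h0
    intro r hr
    obtain ⟨i, j, h1, h2, h3, rfl⟩ := J_diag_elem Ξ ς0 (N+1) (N+1) r hr
    rw [min_self] at h2 h3
    obtain ⟨i', rfl⟩ : ∃ i', i = i' + 1 := ⟨i - 1, by omega⟩
    obtain ⟨j', rfl⟩ : ∃ j', j = j' + 1 := ⟨j - 1, by omega⟩
    have hab : Odd ((i':ℤ) - j') := by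
      rw [Int.odd_iff] at h1 ⊢; push_cast at h1 ⊢; omega
    refine le_trans (hpeel hς0 hς0 i' j' hab) ?_
    have := hJsupmono ς0 ς0 (show N ≤ i' by omega) (show N ≤ j' by omega)
    nlinarith
  have hPgeom : ∀ N : ℕ, sSup (J Ξ ς0 ς0 N N) ≤ d + η^N * (sSup (J Ξ ς0 ς0 0 0) - d) := by
    intro N
    induction N with
    | zero => simp
    | succ N ih =>
      have hC0 : 0 ≤ sSup (J Ξ ς0 ς0 0 0) - d := by
        have := hJd ς0 hς0 ς0 hς0 0 0; linarith
      calc sSup (J Ξ ς0 ς0 (N+1) (N+1)) ≤ η * sSup (J Ξ ς0 ς0 N N) + (1-η) * d := hPrec N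
        _ ≤ η * (d + η^N * (sSup (J Ξ ς0 ς0 0 0) - d)) + (1-η) * d := by nlinarith
        _ = d + η^(N+1) * (sSup (J Ξ ς0 ς0 0 0) - d) := by ring
  have hpowC : ∀ C : ℝ, 0 ≤ C → ∀ ε > (0:ℝ), ∃ N : ℕ, ∀ M, N ≤ M → η^M * C < ε := by
    intro C hC ε hε
    have h1 : Filter.Tendsto (fun M : ℕ => η^M * C) Filter.atTop (nhds 0) := by
      have := tendsto_pow_atTop_nhds_zero_of_lt_one hη0.le hη1
      simpa using this.mul_const C
    have := (h1.eventually (gt_mem_nhds hε)).exists_forall_of_atTop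
    obtain ⟨N, hN⟩ := this
    exact ⟨N, fun M hM => hN M hM⟩
  have hC00 : 0 ≤ sSup (J Ξ ς0 ς0 0 0) - d := by
    have := hJd ς0 hς0 ς0 hς0 0 0; linarith
  have hPtail : ∀ ε > (0:ℝ), ∃ N : ℕ, ∀ M, N ≤ M → sSup (J Ξ ς0 ς0 M M) ≤ d + ε := by
    intro ε hε
    obtain ⟨N, hN⟩ := hpowC _ hC00 ε hε
    exact ⟨N, fun M hM => le_trans (hPgeom M) (by linarith [hN M hM])⟩
  -- the even-indexed orbit of ς0 is Cauchy
  have hxΩ : ∀ n : ℕ, Ξ^[2*n] ς0 ∈ Ω := fun n => hmemΩ ς0 hς0 _ ⟨n, by ring⟩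
  have hyΔ : ∀ m n : ℕ, Ξ^[2*(max m n)+1] ς0 ∈ Δ := fun m n =>
    hmemΔ ς0 hς0 _ ⟨max m n, by ring⟩
  have hcauchy : CauchySeq (fun n => Ξ^[2*n] ς0) := by
    refine cauchy_aux Ω Δ hΩconv d hdnn hdle _ hxΩ (fun m n => Ξ^[2*(max m n)+1] ς0) hyΔ
      (fun N => sSup (J Ξ ς0 ς0 (2*N) (2*N))) ?_ ?_
    · intro N m n hm hn
      constructor
      · refine le_csSup (hJbdd ς0 ς0 (2*N) (2*N)) (Or.inl ⟨2*m, 2*(max m n)+1, ?_, by omega,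
          by omega, rfl⟩)
        rw [Int.odd_iff]; push_cast; omega
      · refine le_csSup (hJbdd ς0 ς0 (2*N) (2*N)) (Or.inl ⟨2*n, 2*(max m n)+1, ?_, by omega,
          by omega, rfl⟩)
        rw [Int.odd_iff]; push_cast; omega
    · intro ε hε
      obtain ⟨N, hN⟩ := hPtail ε hε
      exact ⟨N, hN (2*N) (by omega)⟩
  obtain ⟨ςs, hlim⟩ := cauchySeq_tendsto_of_complete hcauchy
  have hςs : ςs ∈ Ω := hΩc.mem_of_tendsto hlim (Filter.Eventually.of_forall hxΩ)
  -- approximation of ςs by even iterates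
  have hεn : ∀ ε > (0:ℝ), ∀ N0 : ℕ, ∃ n, N0 ≤ n ∧ ‖ςs - Ξ^[2*n] ς0‖ < ε := by
    intro ε hε N0
    obtain ⟨N, hN⟩ := (Metric.tendsto_atTop.mp hlim) ε hε
    refine ⟨max N N0, le_max_right _ _, ?_⟩
    have := hN (max N N0) (le_max_left _ _)
    rwa [dist_eq_norm, norm_sub_rev] at this
  -- the combined recursion for the two-point quantity Q N = sSup (J Ξ ςs ς0 0 N)
  have hQrec : ∀ N : ℕ, sSup (J Ξ ςs ς0 0 (N+1)) ≤
      max (η * sSup (J Ξ ςs ς0 0 N) + (1-η) * d) (sSup (J Ξ ς0 ς0 (N+1) (N+1))) := by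
    intro N
    refine le_of_forall_pos_le_add fun ε hε => ?_
    obtain ⟨n, hnN, hn⟩ := hεn ε hε (N+1)
    obtain ⟨b', hb'⟩ : ∃ b', 2*n = b' + 1 := ⟨2*n - 1, by omega⟩
    have hQN0 : d ≤ sSup (J Ξ ςs ς0 0 N) := hJd ςs hςs ς0 hς0 0 N
    have hPN0 : d ≤ sSup (J Ξ ς0 ς0 (N+1) (N+1)) := hJd ς0 hς0 ς0 hς0 (N+1) (N+1)
    set A := η * sSup (J Ξ ςs ς0 0 N) + (1-η) * d with hA_def
    set B := sSup (J Ξ ς0 ς0 (N+1) (N+1)) with hB_def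
    have hA0 : 0 ≤ A := by rw [hA_def]; nlinarith
    -- the cross-peel bound at level (·, ≥ N)
    have hpeelQ : ∀ p' q' : ℕ, N ≤ q' → Odd ((p':ℤ) - q') →
        ‖Ξ^[p'+1] ςs - Ξ^[q'+1] ς0‖ ≤ A := by
      intro p' q' hq' hodd
      refine le_trans (hpeel hςs hς0 p' q' hodd) ?_
      have := hJsupmono ςs ς0 (show (0:ℕ) ≤ p' by omega) hq'
      rw [hA_def]; nlinarith
    -- distances from ςs itself to odd iterates of ςs
    have hzero : ∀ c : ℕ, Odd c → ‖ςs - Ξ^[c] ςs‖ ≤ ε + A := by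
      intro c hc
      obtain ⟨c', rfl⟩ : ∃ c', c = c' + 1 := ⟨c - 1, by rw [Nat.odd_iff] at hc; omega⟩
      have e : ςs - Ξ^[c'+1] ςs = (ςs - Ξ^[2*n] ς0) + (Ξ^[2*n] ς0 - Ξ^[c'+1] ςs) := by abel
      have h2 : ‖Ξ^[2*n] ς0 - Ξ^[c'+1] ςs‖ ≤ A := by
        rw [norm_sub_rev, hb']
        refine le_trans (hpeel hςs hς0 c' b' ?_) ?_
        · rw [Nat.odd_iff] at hc; rw [Int.odd_iff]; push_cast; omega
        · have := hJsupmono ςs ς0 (show (0:ℕ) ≤ c' by omega) (show N ≤ b' by omega)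
          rw [hA_def]; nlinarith
      calc ‖ςs - Ξ^[c'+1] ςs‖ ≤ ‖ςs - Ξ^[2*n] ς0‖ + ‖Ξ^[2*n] ς0 - Ξ^[c'+1] ςs‖ := by
            rw [e]; exact norm_add_le _ _
        _ ≤ ε + A := add_le_add hn.le h2
    refine Real.sSup_le ?_ (by positivity)
    rintro r (⟨i, j, h1, h2, h3, rfl⟩ | ⟨k, l, h1, h2, h3, rfl⟩ | ⟨p, q, h1, h2, h3, rfl⟩)
    · -- ςs-orbit odd pair
      rcases Nat.eq_zero_or_pos i with hi | hi
      · subst hi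
        have hj : Odd j := by rw [Int.odd_iff] at h1; rw [Nat.odd_iff]; omega
        have := hzero j hj
        simp only [Function.iterate_zero_apply]
        calc ‖ςs - Ξ^[j] ςs‖ ≤ ε + A := this
          _ ≤ max A B + ε := by have := le_max_left A B; linarith
      rcases Nat.eq_zero_or_pos j with hj | hj
      · subst hj
        have hi' : Odd i := by rw [Int.odd_iff] at h1; rw [Nat.odd_iff]; omega
        have := hzero i hi'
        simp only [Function.iterate_zero_apply]
        rw [norm_sub_rev]
        calc ‖ςs - Ξ^[i] ςs‖ ≤ ε + A := this
          _ ≤ max A B + ε := by have := le_max_left A B; linarith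
      obtain ⟨i', rfl⟩ : ∃ i', i = i' + 1 := ⟨i - 1, by omega⟩
      obtain ⟨j', rfl⟩ : ∃ j', j = j' + 1 := ⟨j - 1, by omega⟩
      have hab : Odd ((i':ℤ) - j') := by rw [Int.odd_iff] at h1 ⊢; push_cast at h1 ⊢; omega
      have hstep := hpeel hςs hςs i' j' hab
      have hsub : sSup (J Ξ ςs ςs i' j') ≤ sSup (J Ξ ςs ς0 0 N) :=
        csSup_le_csSup (hJbdd ςs ς0 0 N) (J_nonempty Ξ ςs ςs i' j')
          (J_diag_subset Ξ ςs ς0 i' j' N)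
      have : ‖Ξ^[i'+1] ςs - Ξ^[j'+1] ςs‖ ≤ A := by
        refine le_trans hstep ?_; rw [hA_def]; nlinarith
      calc ‖Ξ^[i'+1] ςs - Ξ^[j'+1] ςs‖ ≤ A := this
        _ ≤ max A B + ε := by have := le_max_left A B; linarith
    · -- ς0-orbit odd pair with indices ≥ N+1
      have : ‖Ξ^[k] ς0 - Ξ^[l] ς0‖ ≤ B := by
        rw [hB_def]
        exact le_csSup (hJbdd ς0 ς0 (N+1) (N+1)) (Or.inl ⟨k, l, h1, h2, h3, rfl⟩)
      calc ‖Ξ^[k] ς0 - Ξ^[l] ς0‖ ≤ B := this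
        _ ≤ max A B + ε := by have := le_max_right A B; linarith
    · -- cross pair, ς0-index ≥ N+1
      rcases Nat.eq_zero_or_pos p with hp | hp
      · subst hp
        have hq : Odd q := by rw [Int.odd_iff] at h1; rw [Nat.odd_iff]; omega
        simp only [Function.iterate_zero_apply]
        have e : ςs - Ξ^[q] ς0 = (ςs - Ξ^[2*n] ς0) + (Ξ^[2*n] ς0 - Ξ^[q] ς0) := by abel
        have h2' : ‖Ξ^[2*n] ς0 - Ξ^[q] ς0‖ ≤ B := by
          rw [hB_def]
          refine le_csSup (hJbdd ς0 ς0 (N+1) (N+1)) (Or.inl ⟨2*n, q, ?_, by omega, h3, rfl⟩)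
          rw [Nat.odd_iff] at hq; rw [Int.odd_iff]; push_cast; omega
        calc ‖ςs - Ξ^[q] ς0‖ ≤ ‖ςs - Ξ^[2*n] ς0‖ + ‖Ξ^[2*n] ς0 - Ξ^[q] ς0‖ := by
              rw [e]; exact norm_add_le _ _
          _ ≤ ε + B := add_le_add hn.le h2'
          _ ≤ max A B + ε := by have := le_max_right A B; linarith
      obtain ⟨p', rfl⟩ : ∃ p', p = p' + 1 := ⟨p - 1, by omega⟩
      obtain ⟨q', rfl⟩ : ∃ q', q = q' + 1 := ⟨q - 1, by omega⟩
      have hab : Odd ((p':ℤ) - q') := by rw [Int.odd_iff] at h1 ⊢; push_cast at h1 ⊢; omega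
      have := hpeelQ p' q' (by omega) hab
      calc ‖Ξ^[p'+1] ςs - Ξ^[q'+1] ς0‖ ≤ A := this
        _ ≤ max A B + ε := by have := le_max_left A B; linarith
  -- geometric decay of Q
  set C := max (sSup (J Ξ ςs ς0 0 0) - d) (sSup (J Ξ ς0 ς0 0 0) - d) with hC_def
  have hC0 : 0 ≤ C := le_trans hC00 (le_max_right _ _)
  have hQgeom : ∀ N : ℕ, sSup (J Ξ ςs ς0 0 N) ≤ d + η^N * C := by
    intro N
    induction N with
    | zero =>
      simp only [pow_zero, one_mul]
      have : sSup (J Ξ ςs ς0 0 0) - d ≤ C := le_max_left _ _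
      linarith
    | succ N ih =>
      refine le_trans (hQrec N) (max_le ?_ ?_)
      · have h' := mul_le_mul_of_nonneg_left ih hη0.le
        calc η * sSup (J Ξ ςs ς0 0 N) + (1-η) * d ≤ η * (d + η^N * C) + (1-η)*d := by linarith
          _ = d + η^(N+1) * C := by ring
      · have h1 := hPgeom (N+1)
        have h2 : sSup (J Ξ ς0 ς0 0 0) - d ≤ C := le_max_right _ _
        have h3 := mul_le_mul_of_nonneg_left h2 (pow_nonneg hη0.le (N+1))
        linarith
  -- conclude: the full odd-gap spread of the orbit of ςs is exactly d
  have hSle : sSup (J Ξ ςs ςs 0 0) ≤ d := by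
    refine le_of_forall_pos_le_add fun ε hε => ?_
    obtain ⟨N, hN⟩ := hpowC C hC0 ε hε
    calc sSup (J Ξ ςs ςs 0 0) ≤ sSup (J Ξ ςs ς0 0 N) :=
          csSup_le_csSup (hJbdd ςs ς0 0 N) (J_nonempty Ξ ςs ςs 0 0)
            (J_diag_subset Ξ ςs ς0 0 0 N)
      _ ≤ d + η^N * C := hQgeom N
      _ ≤ d + ε := by linarith [hN N le_rfl]
  refine ⟨ςs, hςs, le_antisymm ?_ ?_⟩
  · refine le_trans (le_csSup (hJbdd ςs ςs 0 0) ?_) hSle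
    exact Or.inl ⟨0, 1, by decide, Nat.zero_le _, Nat.zero_le _, by simp⟩
  · exact hdle ςs hςs (Ξ ςs) (hcycΩ hςs)
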